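/- Let F(z) = ∑_r a_r z^r be a Laurent series in d+1 variables converging on Log^{-1}(B₀) for an open convex set B₀ ⊆ ℝ^{d+1}, with F bounded on each torus Log^{-1}({u}), u ∈ B₀. Fix a direction r ∈ ℝ^{d+1} and let λ' < sup{ r̂·x : x ∈ B₀ }. Then |a_{r'}| = o(exp(−λ'|r'|)) uniformly as r' → ∞ in some open cone containing r. -/

import Mathlib

open scoped RealInnerProductSpace
open MeasureTheory

/-- if the Laurent coefficients `a r` of `F` are given by Cauchy's integral
formula over tori `Log⁻¹{u}`, `u` in an open convex set `B₀`, with `F` bounded on each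
such torus, and `λ' < sup { r̂·x : x ∈ B₀ }`, then `|a r'| = o(exp(−λ'|r'|))` uniformly
as `r' → ∞` in some open cone containing `r`. -/
theorem laurent_coefficient_exponential_decay (d : ℕ)
    (B : Set (EuclideanSpace ℝ (Fin (d + 1)))) (hBo : IsOpen B) (hBc : Convex ℝ B)
    (F : (Fin (d + 1) → ℂ) → ℂ)
    (a : (Fin (d + 1) → ℤ) → ℂ)
    (hbdd : ∀ u ∈ B, ∃ C : ℝ, ∀ y : Fin (d + 1) → ℝ,
      ‖F (fun i => Complex.exp ((u i : ℂ) + Complex.I * (y i : ℂ)))‖ ≤ C)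
    (hCauchy : ∀ u ∈ B, ∀ r : Fin (d + 1) → ℤ,
      a r = (2 * Real.pi : ℂ) ^ (-(d + 1 : ℤ)) *
        Complex.exp (-(∑ i, (r i : ℂ) * (u i : ℂ))) *
        ∫ y in Set.univ.pi fun _ : Fin (d + 1) => Set.Ioc (0 : ℝ) (2 * Real.pi),
          Complex.exp (-Complex.I * ∑ i, (r i : ℂ) * (y i : ℂ)) *
            F (fun i => Complex.exp ((u i : ℂ) + Complex.I * (y i : ℂ))))
    (r : EuclideanSpace ℝ (Fin (d + 1))) (hr : r ≠ 0)
    (lam' : ℝ) (hlam : ∃ x ∈ B, lam' < ⟪‖r‖⁻¹ • r, x⟫) :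
    ∃ K : Set (EuclideanSpace ℝ (Fin (d + 1))), IsOpen K ∧ r ∈ K ∧
      (∀ c : ℝ, 0 < c → ∀ x ∈ K, c • x ∈ K) ∧
      ∀ ε > (0 : ℝ), ∃ R : ℝ, ∀ r' : Fin (d + 1) → ℤ,
        ((WithLp.equiv 2 (Fin (d + 1) → ℝ)).symm fun i => (r' i : ℝ)) ∈ K →
        R ≤ ‖(WithLp.equiv 2 (Fin (d + 1) → ℝ)).symm fun i => (r' i : ℝ)‖ →
        ‖a r'‖ ≤ ε * Real.exp (-lam' *
          ‖(WithLp.equiv 2 (Fin (d + 1) → ℝ)).symm fun i => (r' i : ℝ)‖) := by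
  obtain ⟨x, hxB, hx⟩ := hlam
  obtain ⟨C, hC⟩ := hbdd x hxB
  have hC0 : 0 ≤ C := le_trans (norm_nonneg _) (hC 0)
  have h2pi : (0:ℝ) < 2 * Real.pi := Real.two_pi_pos
  -- main coefficient bound
  have key : ∀ r' : Fin (d + 1) → ℤ,
      ‖a r'‖ ≤ C * Real.exp (-(∑ i, (r' i : ℝ) * x i)) := by
    intro r'
    rw [hCauchy x hxB r', norm_mul, norm_mul]
    have e1 : ‖(2 * Real.pi : ℂ) ^ (-(d + 1 : ℤ))‖ = (2 * Real.pi) ^ (-(d + 1 : ℤ)) := by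
      have : (2 * Real.pi : ℂ) = ((2 * Real.pi : ℝ) : ℂ) := by push_cast; ring
      rw [this, norm_zpow, Complex.norm_real, Real.norm_eq_abs, abs_of_pos h2pi]
    have e2 : ‖Complex.exp (-(∑ i, (r' i : ℂ) * (x i : ℂ)))‖
        = Real.exp (-(∑ i, (r' i : ℝ) * x i)) := by
      have : (-(∑ i, (r' i : ℂ) * (x i : ℂ)))
          = ((-(∑ i, (r' i : ℝ) * x i) : ℝ) : ℂ) := by push_cast; ring
      rw [this, Complex.norm_exp, Complex.ofReal_re]
    have e3 : ‖∫ y in Set.univ.pi fun _ : Fin (d + 1) => Set.Ioc (0 : ℝ) (2 * Real.pi),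
          Complex.exp (-Complex.I * ∑ i, (r' i : ℂ) * (y i : ℂ)) *
            F (fun i => Complex.exp ((x i : ℂ) + Complex.I * (y i : ℂ)))‖
        ≤ C * (2 * Real.pi) ^ (d + 1) := by
      have hvol : (volume (Set.univ.pi fun _ : Fin (d+1) => Set.Ioc (0:ℝ) (2*Real.pi)))
          = ENNReal.ofReal ((2*Real.pi)^(d+1)) := by
        rw [volume_pi_pi]
        simp [Real.volume_Ioc, ← ENNReal.ofReal_pow h2pi.le]
        rw [ENNReal.ofReal_pow h2pi.le, ENNReal.ofReal_mul (by norm_num)]; simp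
      have hfin : (volume (Set.univ.pi fun _ : Fin (d+1) => Set.Ioc (0:ℝ) (2*Real.pi))) < ⊤ := by
        rw [hvol]; exact ENNReal.ofReal_lt_top
      have := norm_setIntegral_le_of_norm_le_const_ae (μ := volume)
        (f := fun y : Fin (d+1) → ℝ =>
          Complex.exp (-Complex.I * ∑ i, (r' i : ℂ) * (y i : ℂ)) *
            F (fun i => Complex.exp ((x i : ℂ) + Complex.I * (y i : ℂ)))) (C := C)
        hfin (Filter.Eventually.of_forall ?_)
      · refine le_trans this ?_
        rw [measureReal_def, hvol, ENNReal.toReal_ofReal (by positivity)]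
      · intro y
        rw [norm_mul]
        have : ‖Complex.exp (-Complex.I * ∑ i, (r' i : ℂ) * (y i : ℂ))‖ = 1 := by
          have : (-Complex.I * ∑ i, (r' i : ℂ) * (y i : ℂ))
              = -Complex.I * ((∑ i, (r' i : ℝ) * y i : ℝ) : ℂ) := by push_cast; ring
          rw [this, Complex.norm_exp]
          simp
        rw [this, one_mul]
        exact hC y
    rw [e1, e2]
    calc (2 * Real.pi) ^ (-(d + 1 : ℤ)) * Real.exp (-(∑ i, (r' i : ℝ) * x i)) *
          ‖∫ y in Set.univ.pi fun _ : Fin (d + 1) => Set.Ioc (0 : ℝ) (2 * Real.pi),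
          Complex.exp (-Complex.I * ∑ i, (r' i : ℂ) * (y i : ℂ)) *
            F (fun i => Complex.exp ((x i : ℂ) + Complex.I * (y i : ℂ)))‖
        ≤ (2 * Real.pi) ^ (-(d + 1 : ℤ)) * Real.exp (-(∑ i, (r' i : ℝ) * x i)) *
          (C * (2 * Real.pi) ^ (d + 1)) := by
          apply mul_le_mul_of_nonneg_left e3
          positivity
      _ = C * Real.exp (-(∑ i, (r' i : ℝ) * x i)) := by
          rw [zpow_neg, ← zpow_natCast (2 * Real.pi) (d+1)]
          push_cast
          field_simp
  -- the cone
  set t := ⟪‖r‖⁻¹ • r, x⟫ with ht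
  set δ := (t - lam') / 2 with hδ
  have hδ0 : 0 < δ := by simp only [hδ]; linarith
  refine ⟨{v | (lam' + δ) * ‖v‖ < ⟪v, x⟫}, ?_, ?_, ?_, ?_⟩
  · exact isOpen_lt (continuous_const.mul continuous_norm)
      (continuous_id.inner continuous_const)
  · have hrn : (0:ℝ) < ‖r‖ := norm_pos_iff.mpr hr
    have : ⟪r, x⟫ = ‖r‖ * t := by
      rw [ht, real_inner_smul_left]
      field_simp
    simp only [Set.mem_setOf_eq, this]
    have : lam' + δ < t := by simp only [hδ]; linarith
    nlinarith
  · intro c hc v hv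
    simp only [Set.mem_setOf_eq] at hv ⊢
    rw [real_inner_smul_left, norm_smul, Real.norm_eq_abs, abs_of_pos hc]
    calc (lam' + δ) * (c * ‖v‖) = c * ((lam' + δ) * ‖v‖) := by ring
      _ < c * ⟪v, x⟫ := by exact mul_lt_mul_of_pos_left hv hc
  · intro ε hε
    refine ⟨Real.log ((C + 1) / ε) / δ, ?_⟩
    intro r' hK hR
    set v := (WithLp.equiv 2 (Fin (d + 1) → ℝ)).symm fun i => (r' i : ℝ) with hv
    have hinner : ⟪v, x⟫ = ∑ i, (r' i : ℝ) * x i := by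
      simp [hv, PiLp.inner_apply, mul_comm]
    have h1 : ‖a r'‖ ≤ C * Real.exp (-⟪v, x⟫) := by rw [hinner]; exact key r'
    have hKv : (lam' + δ) * ‖v‖ < ⟪v, x⟫ := hK
    have h2 : C * Real.exp (-⟪v, x⟫) ≤ C * Real.exp (-((lam' + δ) * ‖v‖)) := by
      apply mul_le_mul_of_nonneg_left _ hC0
      exact Real.exp_le_exp.mpr (by linarith)
    have h3 : C * Real.exp (-(δ * ‖v‖)) ≤ ε := by
      have hs : Real.log ((C + 1) / ε) ≤ δ * ‖v‖ := by
        have := (div_le_iff₀' hδ0).mp hR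
        linarith [this]
      have h4 : Real.exp (-(δ * ‖v‖)) ≤ ε / (C + 1) := by
        have hle : -(δ * ‖v‖) ≤ Real.log (ε / (C + 1)) := by
          rw [show ε / (C + 1) = ((C + 1) / ε)⁻¹ by field_simp, Real.log_inv]
          linarith
        calc Real.exp (-(δ * ‖v‖)) ≤ Real.exp (Real.log (ε / (C + 1))) :=
              Real.exp_le_exp.mpr hle
          _ = ε / (C + 1) := Real.exp_log (by positivity)
      calc C * Real.exp (-(δ * ‖v‖)) ≤ (C + 1) * (ε / (C + 1)) :=
            mul_le_mul (by linarith) h4 (Real.exp_nonneg _) (by linarith)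
        _ = ε := by field_simp
    calc ‖a r'‖ ≤ C * Real.exp (-((lam' + δ) * ‖v‖)) := le_trans h1 h2
      _ = (C * Real.exp (-(δ * ‖v‖))) * Real.exp (-lam' * ‖v‖) := by
          rw [mul_assoc, ← Real.exp_add]; ring_nf
      _ ≤ ε * Real.exp (-lam' * ‖v‖) :=
          mul_le_mul_of_nonneg_right h3 (Real.exp_nonneg _)
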